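/- If σ ∈ B_n is a signed arc permutation, then for each q ∈ {1,...,n}, the set {|σ(j)| : 1 ≤ j ≤ q} of absolute values of the first q entries of the one-line notation of σ is a cyclic interval modulo n. -/

import Mathlib

/-- The hyperoctahedral group `B_n`, realized as the group of permutations `σ` of `ℤ`
satisfying `σ(-j) = -σ(j)` for all `j` and fixing every `j` with `|j| > n`
(so `σ` permutes `{±1, ..., ±n}`). -/
def SignedPermGroup (n : ℕ) : Subgroup (Equiv.Perm ℤ) where
  carrier := {σ | (∀ j : ℤ, σ (-j) = -σ j) ∧ (∀ j : ℤ, (n : ℤ) < |j| → σ j = j)}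
  one_mem' := by constructor <;> intro j <;> simp
  mul_mem' := by
    rintro σ τ ⟨hσ1, hσ2⟩ ⟨hτ1, hτ2⟩
    constructor
    · intro j
      simp only [Equiv.Perm.mul_apply, hτ1, hσ1]
    · intro j hj
      simp only [Equiv.Perm.mul_apply, hτ2 j hj, hσ2 j hj]
  inv_mem' := by
    rintro σ ⟨h1, h2⟩
    constructor
    · intro j
      apply σ.injective
      rw [Equiv.Perm.inv_def, Equiv.apply_symm_apply, h1, Equiv.apply_symm_apply]
    · intro j hj
      apply σ.injective
      rw [Equiv.Perm.inv_def, Equiv.apply_symm_apply, h2 j hj]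

/-- The simple generator `s_i` of `B_n` as a permutation of `ℤ`: `s_0` swaps `1 ↔ -1`;
for `i ≥ 1`, `s_i` swaps `i ↔ i+1` and `-i ↔ -(i+1)`. -/
def bSimplePerm (i : ℕ) : Equiv.Perm ℤ :=
  if i = 0 then Equiv.swap 1 (-1)
  else Equiv.swap (i : ℤ) ((i : ℤ) + 1) * Equiv.swap (-(i : ℤ)) (-((i : ℤ) + 1))

theorem bSimplePerm_mem (n : ℕ) (i : ℕ) (hi : i < n) :
    bSimplePerm i ∈ SignedPermGroup n := by
  have hn : (0 : ℤ) < (n : ℤ) := by exact_mod_cast Nat.pos_of_ne_zero (by omega)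
  constructor
  · intro j
    by_cases h0 : i = 0
    · subst h0
      simp only [bSimplePerm, reduceIte, Equiv.swap_apply_def]
      split_ifs <;> omega
    · have hipos : (1 : ℤ) ≤ (i : ℤ) := by exact_mod_cast Nat.one_le_iff_ne_zero.2 h0
      simp only [bSimplePerm, if_neg h0, Equiv.Perm.mul_apply, Equiv.swap_apply_def]
      split_ifs <;> omega
  · intro j hj
    have hj' : (n : ℤ) < j ∨ j < -(n : ℤ) := by rcases abs_cases j with ⟨h, _⟩ | ⟨h, _⟩ <;> omega
    by_cases h0 : i = 0
    · subst h0
      simp only [bSimplePerm, reduceIte, Equiv.swap_apply_def]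
      split_ifs <;> omega
    · have hipos : (1 : ℤ) ≤ (i : ℤ) := by exact_mod_cast Nat.one_le_iff_ne_zero.2 h0
      have hile : (i : ℤ) < (n : ℤ) := by exact_mod_cast hi
      simp only [bSimplePerm, if_neg h0, Equiv.Perm.mul_apply, Equiv.swap_apply_def]
      split_ifs <;> omega

/-- The simple generator `s_i` as an element of `B_n`. -/
def bSimple (n : ℕ) (i : Fin n) : SignedPermGroup n :=
  ⟨bSimplePerm i, bSimplePerm_mem n i i.2⟩

/-- The Coxeter length of an element of `B_n`: the minimal length of a word in the
simple generators `s_0, ..., s_{n-1}` representing it. -/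
noncomputable def blength {n : ℕ} (x : SignedPermGroup n) : ℕ :=
  sInf {m | ∃ l : List (Fin n), l.length = m ∧ (l.map (bSimple n)).prod = x}

/-- The one-line notation `w(1), w(2), ..., w(n)` of a signed permutation. -/
def oneLine (n : ℕ) (σ : SignedPermGroup n) : List ℤ :=
  (List.range n).map (fun k => (σ : Equiv.Perm ℤ) ((k : ℤ) + 1))

/-- A signed permutation is a *signed arc permutation* if its one-line notation is a shuffle of
a word over `{1,...,n}` and a word over `{-1,...,-n}`, each increasing by `1` modulo `n` at
every step, whose first letters `a₁, b₁` (when both words are nonempty) satisfy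
`a₁ ≡ -b₁ + 1 (mod n)`. -/
def IsSignedArc (n : ℕ) (σ : SignedPermGroup n) : Prop :=
  List.Chain' (fun x y : ℤ => ((y : ZMod n) = (x : ZMod n) + 1))
      ((oneLine n σ).filter (fun x => decide (0 < x))) ∧
  List.Chain' (fun x y : ℤ => ((y : ZMod n) = (x : ZMod n) + 1))
      ((oneLine n σ).filter (fun x => decide (x < 0))) ∧
  (∀ a ∈ ((oneLine n σ).filter (fun x => decide (0 < x))).head?,
   ∀ b ∈ ((oneLine n σ).filter (fun x => decide (x < 0))).head?,
      ((a : ZMod n) = -(b : ZMod n) + 1))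

/-- A finite set `J ⊆ ℤ` with `q` elements is a *cyclic interval modulo `n`* if there are `q`
consecutive integers congruent modulo `n` to the elements of `J`. -/
def IsCyclicInterval (n : ℕ) (J : Finset ℤ) : Prop :=
  ∃ a : ℤ, ∃ e : {x // x ∈ Finset.Ico a (a + (J.card : ℤ))} ≃ {x // x ∈ J},
    ∀ x : {x // x ∈ Finset.Ico a (a + (J.card : ℤ))}, (((x : ℤ)) : ZMod n) = (((e x : ℤ)) : ZMod n)

lemma cyclic_builder (n q : ℕ) (hq : q ≤ n) (J : Finset ℤ)
    (hcard : J.card = q) (a : ℤ)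
    (hsurj : ∀ k : ℕ, k < q → ∃ x ∈ J, (x : ZMod n) = ((a + k : ℤ) : ZMod n)) :
    IsCyclicInterval n J := by
  refine ⟨a, ?_⟩
  have hIco : ∀ x ∈ Finset.Ico a (a + (J.card : ℤ)), ∃ k : ℕ, k < q ∧ x = a + k := by
    intro x hx
    rw [Finset.mem_Ico] at hx
    refine ⟨(x - a).toNat, by omega, by omega⟩
  have key : ∀ x : {x // x ∈ Finset.Ico a (a + (J.card : ℤ))},
      ∃ y : {x // x ∈ J}, ((x : ℤ) : ZMod n) = ((y : ℤ) : ZMod n) := by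
    rintro ⟨x, hx⟩
    obtain ⟨k, hk, rfl⟩ := hIco x hx
    obtain ⟨y, hy, hy2⟩ := hsurj k hk
    exact ⟨⟨y, hy⟩, hy2.symm⟩
  choose g hg using key
  have hginj : Function.Injective g := by
    rintro ⟨x, hx⟩ ⟨y, hy⟩ hxy
    have h1 := hg ⟨x, hx⟩
    have h2 := hg ⟨y, hy⟩
    rw [hxy, ← h2] at h1
    rw [ZMod.intCast_eq_intCast_iff'] at h1
    have hd : (n : ℤ) ∣ y - x := Int.ModEq.dvd h1
    rw [Finset.mem_Ico] at hx hy
    have : y - x = 0 := by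
      refine Int.eq_zero_of_abs_lt_dvd hd ?_
      rcases abs_cases (y - x) with ⟨h, _⟩ | ⟨h, _⟩ <;> omega
    exact Subtype.ext (show x = y by omega)
  have hbij : Function.Bijective g := by
    rw [Fintype.bijective_iff_injective_and_card]
    refine ⟨hginj, ?_⟩
    rw [Fintype.card_coe, Fintype.card_coe, Int.card_Ico, hcard]
    omega
  exact ⟨Equiv.ofBijective g hbij, hg⟩

lemma chain_get (n : ℕ) : ∀ (l : List ℤ),
    List.Chain' (fun x y : ℤ => ((y : ZMod n) = (x : ZMod n) + 1)) l →
    ∀ i (hi : i < l.length) (h0 : 0 < l.length),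
      ((l.get ⟨i, hi⟩ : ℤ) : ZMod n) = ((l.get ⟨0, h0⟩ : ℤ) : ZMod n) + i := by
  intro l
  induction l with
  | nil => intro _ i hi; simp at hi
  | cons x xs ih =>
    intro h i hi h0
    match i, hi with
    | 0, _ => simp
    | (i+1), hi =>
      match xs, h, hi with
      | y :: ys, h, hi =>
        obtain ⟨hxy, hch⟩ := List.isChain_cons_cons.mp h
        have := ih hch i (by simpa using hi) (by simp)
        simp only [List.get] at this ⊢
        rw [this, hxy]
        push_cast
        ring

lemma filter_sign_length (l : List ℤ) (h : ∀ x ∈ l, x ≠ 0) :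
    (l.filter (fun x => decide (0 < x))).length + (l.filter (fun x => decide (x < 0))).length
      = l.length := by
  induction l with
  | nil => simp
  | cons x xs ih =>
    have hx := h x (by simp)
    have hih := ih (fun y hy => h y (by simp [hy]))
    rcases lt_trichotomy x 0 with hx' | hx' | hx'
    · simp only [List.filter_cons, decide_eq_true_eq]
      rw [if_neg (by simpa using not_lt.mpr hx'.le), if_pos (by simpa using hx')]
      simp only [List.length_cons]
      omega
    · exact absurd hx' hx
    · simp only [List.filter_cons, decide_eq_true_eq]
      rw [if_pos (by simpa using hx'), if_neg (by simpa using not_lt.mpr hx'.le)]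
      simp only [List.length_cons]
      omega

lemma prefix_head? {α : Type*} {l₁ l₂ : List α} (h : l₁ <+: l₂) (h0 : l₁ ≠ []) :
    l₂.head? = l₁.head? := by
  obtain ⟨r, rfl⟩ := h
  cases l₁ with
  | nil => exact absurd rfl h0
  | cons a t => simp

/-- If `σ ∈ B_n` is a signed arc permutation, then for each `q ∈ {1,...,n}` the set of absolute
values of the first `q` entries of the one-line notation of `σ` is a cyclic interval mod `n`. -/
theorem signedArc_prefix_cyclicInterval (n : ℕ) (σ : SignedPermGroup n)
    (h : IsSignedArc n σ) (q : ℕ) (hq1 : 1 ≤ q) (hqn : q ≤ n) :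
    IsCyclicInterval n
      ((Finset.range q).image (fun j : ℕ => |(σ : Equiv.Perm ℤ) ((j : ℤ) + 1)|)) := by
  classical
  obtain ⟨hodd, hfix⟩ := σ.2
  set π : Equiv.Perm ℤ := (σ : Equiv.Perm ℤ) with hπ
  have hσ0 : π 0 = 0 := by
    have := hodd 0
    rw [neg_zero] at this
    omega
  have hne0 : ∀ j : ℕ, π ((j : ℤ) + 1) ≠ 0 := by
    intro j hj
    have h1 : π ((j : ℤ) + 1) = π 0 := by rw [hσ0, hj]
    have := π.injective h1
    omega
  set f : ℕ → ℤ := fun j => π ((j : ℤ) + 1) with hf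
  have hinjf : Set.InjOn (fun j : ℕ => |f j|) (Finset.range q) := by
    intro i _ j _ hij
    simp only [abs_eq_abs] at hij
    rcases hij with h1 | h1
    · have := π.injective h1
      omega
    · have h2 : π ((i : ℤ) + 1) = π (-((j : ℤ) + 1)) := by
        rw [hodd]
        exact h1
      have := π.injective h2
      omega
  have hcard : ((Finset.range q).image (fun j : ℕ => |π ((j : ℤ) + 1)|)).card = q := by
    rw [Finset.card_image_of_injOn hinjf, Finset.card_range]
  set l : List ℤ := (List.range q).map f with hld
  have hlq : l.length = q := by simp [hld]
  have htake : (oneLine n σ).take q = l := by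
    apply List.ext_getElem
    · simp [oneLine, hld, hqn, ← List.map_eq_flatMap]
    · intro i h1 h2
      simp [oneLine, hld, List.getElem_take, hf, ← List.map_eq_flatMap]
      rfl
  have hmeml : ∀ x ∈ l, ∃ j : ℕ, j < q ∧ f j = x := by
    intro x hx
    simpa [hld, List.mem_map, List.mem_range] using hx
  have hmemJ : ∀ x ∈ l, |x| ∈ (Finset.range q).image (fun j : ℕ => |π ((j : ℤ) + 1)|) := by
    intro x hx
    obtain ⟨j, hj, rfl⟩ := hmeml x hx
    exact Finset.mem_image.mpr ⟨j, Finset.mem_range.mpr hj, rfl⟩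
  set P := l.filter (fun x => decide (0 < x)) with hPd
  set N := l.filter (fun x => decide (x < 0)) with hNd
  have hnz : ∀ x ∈ l, x ≠ 0 := by
    intro x hx
    obtain ⟨j, hj, rfl⟩ := hmeml x hx
    exact hne0 j
  have hlen : P.length + N.length = q := by
    rw [hPd, hNd, filter_sign_length l hnz, hlq]
  have hprefP : P <+: (oneLine n σ).filter (fun x => decide (0 < x)) := by
    rw [hPd, ← htake]
    exact List.IsPrefix.filter _ (List.take_prefix q _)
  have hprefN : N <+: (oneLine n σ).filter (fun x => decide (x < 0)) := by
    rw [hNd, ← htake]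
    exact List.IsPrefix.filter _ (List.take_prefix q _)
  have hchainP := h.1.prefix hprefP
  have hchainN := h.2.1.prefix hprefN
  have hNelt : ∀ i (hi : i < N.length),
      N.get ⟨i, hi⟩ < 0 ∧ -(N.get ⟨i, hi⟩) ∈ (Finset.range q).image
        (fun j : ℕ => |π ((j : ℤ) + 1)|) := by
    intro i hi
    have hmem : N.get ⟨i, hi⟩ ∈ l := List.mem_of_mem_filter (List.get_mem N ⟨i, hi⟩)
    have hneg : N.get ⟨i, hi⟩ < 0 := by
      have := List.of_mem_filter (List.get_mem N ⟨i, hi⟩)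
      simpa using this
    have := hmemJ _ hmem
    rw [abs_of_neg hneg] at this
    exact ⟨hneg, this⟩
  have hPelt : ∀ i (hi : i < P.length),
      0 < P.get ⟨i, hi⟩ ∧ P.get ⟨i, hi⟩ ∈ (Finset.range q).image
        (fun j : ℕ => |π ((j : ℤ) + 1)|) := by
    intro i hi
    have hmem : P.get ⟨i, hi⟩ ∈ l := List.mem_of_mem_filter (List.get_mem P ⟨i, hi⟩)
    have hpos : 0 < P.get ⟨i, hi⟩ := by
      have := List.of_mem_filter (List.get_mem P ⟨i, hi⟩)
      simpa using this
    have := hmemJ _ hmem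
    rw [abs_of_pos hpos] at this
    exact ⟨hpos, this⟩
  rcases Nat.eq_zero_or_pos P.length with hP0 | hP0
  · -- all entries negative
    have h0 : 0 < N.length := by omega
    apply cyclic_builder n q hqn _ hcard (-(N.get ⟨0, h0⟩) - ((q : ℤ) - 1))
    intro k hk
    have hi : q - (k + 1) < N.length := by omega
    refine ⟨-(N.get ⟨q - (k + 1), hi⟩), (hNelt _ hi).2, ?_⟩
    have hres := chain_get n N hchainN (q - (k + 1)) hi h0
    push_cast
    rw [hres, Nat.cast_sub (by omega : k + 1 ≤ q)]
    push_cast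
    ring
  · set t := N.length with htd
    have hA := hPelt 0 hP0
    apply cyclic_builder n q hqn _ hcard (P.get ⟨0, hP0⟩ - (t : ℤ))
    intro k hk
    by_cases hkt : k < t
    · have h0 : 0 < N.length := by omega
      have hlink : ((P.get ⟨0, hP0⟩ : ℤ) : ZMod n)
          = -((N.get ⟨0, h0⟩ : ℤ) : ZMod n) + 1 := by
        apply h.2.2
        · rw [prefix_head? hprefP (List.ne_nil_of_length_pos hP0),
            List.head?_eq_head (List.ne_nil_of_length_pos hP0), List.get_mk_zero hP0]
          rfl
        · rw [prefix_head? hprefN (List.ne_nil_of_length_pos h0),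
            List.head?_eq_head (List.ne_nil_of_length_pos h0), List.get_mk_zero h0]
          rfl
      have hi : t - (k + 1) < N.length := by omega
      refine ⟨-(N.get ⟨t - (k + 1), hi⟩), (hNelt _ hi).2, ?_⟩
      have hres := chain_get n N hchainN (t - (k + 1)) hi h0
      push_cast
      rw [hres, Nat.cast_sub (by omega : k + 1 ≤ t), hlink]
      push_cast
      ring
    · have hi : k - t < P.length := by omega
      refine ⟨P.get ⟨k - t, hi⟩, (hPelt _ hi).2, ?_⟩
      have hres := chain_get n P hchainP (k - t) hi hP0
      push_cast
      rw [hres, Nat.cast_sub (by omega : t ≤ k)]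
      ring
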